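/- Let N be a positive integer, E ⊆ ℤ_N, and Λ ⊆ ℤ_N. If the characters {e_λ : λ ∈ Λ} are pairwise orthogonal in ℓ²(E), then Σ_{λ ∈ Λ} |𝟙̂_E(x − λ)|² ≤ |E|² for all x ∈ ℤ_N. -/

import Mathlib

open scoped InnerProductSpace

/-- The character `e_λ(x) = exp(2πiλx/N)` on `ℤ_N`. -/
noncomputable def e1 (N : ℕ) (lam x : ZMod N) : ℂ :=
  Complex.exp (2 * (Real.pi : ℂ) * Complex.I * (lam.val : ℂ) * (x.val : ℂ) / (N : ℂ))

/-- Fourier transform of the indicator of `E ⊆ ℤ_N`. -/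
noncomputable def indFT (N : ℕ) (E : Finset (ZMod N)) (x : ZMod N) : ℂ :=
  ∑ k ∈ E, Complex.exp (-(2 * (Real.pi : ℂ) * Complex.I) * (x.val : ℂ) * (k.val : ℂ) / (N : ℂ))

noncomputable def chi (N : ℕ) (a : ℤ) : ℂ :=
  Complex.exp (((2 * Real.pi * a / N : ℝ)) * Complex.I)

lemma abs_chi (N : ℕ) (a : ℤ) : ‖chi N a‖ = 1 :=
  Complex.norm_exp_ofReal_mul_I _

lemma conj_chi (N : ℕ) (a : ℤ) : (starRingEnd ℂ) (chi N a) = chi N (-a) := by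
  rw [chi, ← Complex.exp_conj, map_mul, Complex.conj_ofReal, Complex.conj_I]
  congr 1
  push_cast
  ring

lemma chi_congr (N : ℕ) [NeZero N] {a b : ℤ} (h : (a : ZMod N) = (b : ZMod N)) :
    chi N a = chi N b := by
  have hd : (N : ℤ) ∣ a - b := by
    refine (ZMod.intCast_zmod_eq_zero_iff_dvd (a - b) N).1 ?_
    push_cast
    rw [h]
    ring
  obtain ⟨m, hm⟩ := hd
  have ha : a = b + N * m := by linarith [hm]
  have hN : (N : ℂ) ≠ 0 := Nat.cast_ne_zero.2 (NeZero.ne N)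
  have : chi N a = chi N b * Complex.exp ((m : ℂ) * (2 * Real.pi * Complex.I)) := by
    rw [chi, chi, ← Complex.exp_add]
    congr 1
    push_cast [ha]
    field_simp
  rw [this, Complex.exp_int_mul_two_pi_mul_I, mul_one]

lemma e1_eq_chi (N : ℕ) (l x : ZMod N) : e1 N l x = chi N (l.val * x.val) := by
  rw [e1, chi]
  congr 1
  push_cast
  ring

lemma indFT_eq (N : ℕ) (E : Finset (ZMod N)) (x : ZMod N) :
    indFT N E x = ∑ k ∈ E, chi N (-(x.val * k.val)) := by
  refine Finset.sum_congr rfl fun k _ => ?_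
  rw [chi]
  congr 1
  push_cast
  ring

/-- If the characters `{e_λ : λ ∈ Λ}` are pairwise orthogonal in `ℓ²(E)`, then
`Σ_{λ ∈ Λ} |𝟙̂_E(x − λ)|² ≤ |E|²` for all `x`. -/
theorem orthogonal_implies_packing (N : ℕ) [NeZero N] (E L : Finset (ZMod N))
    (horth : ∀ l ∈ L, ∀ m ∈ L, l ≠ m →
      ∑ x ∈ E, e1 N l x * (starRingEnd ℂ) (e1 N m x) = 0) :
    ∀ x : ZMod N, ∑ l ∈ L, ‖indFT N E (x - l)‖ ^ 2 ≤ (E.card : ℝ) ^ 2 := by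
  intro x
  rcases Finset.eq_empty_or_nonempty E with rfl | hE
  · simp [indFT]
  have hcard : (0 : ℝ) < E.card := by exact_mod_cast hE.card_pos
  set s : ℝ := Real.sqrt E.card with hs
  have hs_pos : 0 < s := Real.sqrt_pos.2 hcard
  have hs_sq : s * s = E.card := Real.mul_self_sqrt hcard.le
  -- the orthonormal family
  set v : ↥L → EuclideanSpace ℂ ↥E := fun l => WithLp.toLp 2 (fun k : ↥E => e1 N l.1 k.1 / (s : ℂ)) with hv
  set f : EuclideanSpace ℂ ↥E := WithLp.toLp 2 (fun k : ↥E => chi N ((x.val : ℤ) * (k.1.val : ℤ))) with hf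
  have habs_e1 : ∀ (l k : ZMod N), ‖e1 N l k‖ = 1 := fun l k => by
    rw [e1_eq_chi]; exact abs_chi _ _
  have hinner : ∀ l m : ↥L, ⟪v l, v m⟫_ℂ =
      (∑ k : ↥E, (starRingEnd ℂ) (e1 N l.1 k.1) * e1 N m.1 k.1) / ((E.card : ℂ)) := by
    intro l m
    rw [PiLp.inner_apply, Finset.sum_div]
    refine Finset.sum_congr rfl fun k _ => ?_
    simp only [hv, RCLike.inner_apply, map_div₀, Complex.conj_ofReal, div_mul_div_comm]
    congr 1
    · ring
    · exact_mod_cast hs_sq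
  have horthonormal : Orthonormal ℂ v := by
    rw [orthonormal_iff_ite]
    intro l m
    rw [hinner]
    by_cases hlm : l = m
    · subst hlm
      simp only [if_pos rfl]
      have : ∀ k : ↥E, (starRingEnd ℂ) (e1 N l.1 k.1) * e1 N l.1 k.1 = 1 := by
        intro k
        rw [mul_comm, Complex.mul_conj]
        norm_cast
        rw [← Complex.sq_norm, habs_e1]
        norm_num
      rw [Finset.sum_congr rfl fun k _ => this k]
      have hcardC : (E.card : ℂ) ≠ 0 := Nat.cast_ne_zero.2 hE.card_pos.ne'
      simp only [Finset.sum_const, Finset.card_univ, Fintype.card_coe, nsmul_eq_mul, mul_one]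
      exact div_self hcardC
    · rw [if_neg hlm]
      have hne : l.1 ≠ m.1 := fun h => hlm (Subtype.ext h)
      have h0 : ∑ k : ↥E, (starRingEnd ℂ) (e1 N l.1 k.1) * e1 N m.1 k.1 = 0 := by
        have := horth m.1 m.2 l.1 l.2 (Ne.symm hne)
        rw [Finset.sum_coe_sort E (fun k => (starRingEnd ℂ) (e1 N l.1 k) * e1 N m.1 k)]
        rw [← this]
        exact Finset.sum_congr rfl fun k _ => by ring
      rw [h0, zero_div]
  have hbessel := horthonormal.sum_inner_products_le f (s := Finset.univ)
  -- compute ‖f‖^2 = E.card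
  have hnormf : ‖f‖ ^ 2 = (E.card : ℝ) := by
    rw [EuclideanSpace.norm_eq, Real.sq_sqrt (by positivity)]
    have h1 : ∀ k : ↥E, ‖f k‖ ^ 2 = 1 := fun k => by
      simp [hf, abs_chi]
    rw [Finset.sum_congr rfl fun k _ => h1 k]
    simp
  -- relate inner products to indFT
  have hip : ∀ l : ↥L, ‖indFT N E (x - l.1)‖ = s * ‖⟪v l, f⟫_ℂ‖ := by
    intro l
    have hval : ∀ k : ZMod N,
        (((-(((x - l.1).val : ℤ) * (k.val : ℤ))) : ℤ) : ZMod N)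
          = (((((l.1.val : ℤ) - (x.val : ℤ)) * (k.val : ℤ)) : ℤ) : ZMod N) := by
      intro k
      push_cast [ZMod.intCast_cast, ZMod.natCast_val, ZMod.cast_id]
      ring
    have h1 : indFT N E (x - l.1)
        = ∑ k ∈ E, chi N (((l.1.val : ℤ) - (x.val : ℤ)) * (k.val : ℤ)) := by
      rw [indFT_eq]
      exact Finset.sum_congr rfl fun k _ => chi_congr N (hval k)
    have h2 : ⟪v l, f⟫_ℂ
        = (∑ k : ↥E, chi N (((x.val : ℤ) - (l.1.val : ℤ)) * (k.1.val : ℤ))) / (s : ℂ) := by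
      rw [PiLp.inner_apply, Finset.sum_div]
      refine Finset.sum_congr rfl fun k _ => ?_
      simp only [hv, hf, RCLike.inner_apply, map_div₀]
      rw [e1_eq_chi, conj_chi]
      rw [← mul_div_assoc]
      congr 1
      · rw [← chi_congr N (a := -((l.1.val : ℤ) * (k.1.val : ℤ)) + (x.val : ℤ) * (k.1.val : ℤ))
          (b := ((x.val : ℤ) - (l.1.val : ℤ)) * (k.1.val : ℤ)) (by push_cast; ring)]
        rw [chi, chi, chi, ← Complex.exp_add]
        congr 1
        push_cast
        ring
      · simp
    have hconj : indFT N E (x - l.1)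
        = (starRingEnd ℂ) (∑ k : ↥E, chi N (((x.val : ℤ) - (l.1.val : ℤ)) * (k.1.val : ℤ))) := by
      rw [map_sum, h1, ← Finset.sum_coe_sort E
        (fun k => chi N (((l.1.val : ℤ) - (x.val : ℤ)) * (k.val : ℤ)))]
      refine Finset.sum_congr rfl fun k _ => ?_
      rw [conj_chi]
      exact chi_congr N (by push_cast; ring)
    rw [hconj, h2, Complex.norm_conj]
    simp only [norm_div, Complex.norm_real, Real.norm_eq_abs]
    rw [abs_of_pos hs_pos]
    field_simp
  calc ∑ l ∈ L, ‖indFT N E (x - l)‖ ^ 2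
      = ∑ l : ↥L, (s * ‖⟪v l, f⟫_ℂ‖) ^ 2 := by
        rw [← Finset.sum_coe_sort L (fun l => ‖indFT N E (x - l)‖ ^ 2)]
        exact Finset.sum_congr rfl fun l _ => by rw [hip l]
    _ = (E.card : ℝ) * ∑ l : ↥L, ‖⟪v l, f⟫_ℂ‖ ^ 2 := by
        rw [Finset.mul_sum]
        refine Finset.sum_congr rfl fun l _ => ?_
        rw [mul_pow, ← hs_sq]; ring
    _ ≤ (E.card : ℝ) * ‖f‖ ^ 2 := by
        exact mul_le_mul_of_nonneg_left hbessel hcard.le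
    _ = (E.card : ℝ) ^ 2 := by rw [hnormf]; ring
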